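/- arXiv:0906.1500 — 2 statements merged into one kernel-verified Lean document; each statement's English description precedes it below -/
import Mathlib

section
/- Let F be a field and R = F[t, t⁻¹] the ring of Laurent polynomials. Let H be a finitely generated R-module on which multiplication by (t − 1) is bijective. Then H is a torsion R-module, i.e. every element of H is annihilated by some nonzero element of R. -/
/-- Let `R = F[t, t⁻¹]` be the Laurent polynomial ring over a field `F` and let `H` be a
finitely generated `R`-module on which multiplication by `t − 1` is bijective. Then `H`
is a torsion `R`-module: every element is annihilated by some nonzero element of `R`. -/
theorem torsion_of_t_sub_one_bijective {F : Type*} [Field F] (H : Type*) [AddCommGroup H]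
    [Module (LaurentPolynomial F) H] [Module.Finite (LaurentPolynomial F) H]
    (hbij : Function.Bijective
      (fun h : H => ((LaurentPolynomial.T 1 - 1 : LaurentPolynomial F)) • h)) :
    ∀ h : H, ∃ r : LaurentPolynomial F, r ≠ 0 ∧ r • h = 0 := by
  set R := LaurentPolynomial F
  set p : R := LaurentPolynomial.T 1 - 1
  set I : Ideal R := Ideal.span {p}
  have hle : (⊤ : Submodule R H) ≤ I • ⊤ := by
    intro h _
    obtain ⟨h', hh'⟩ := hbij.2 h
    rw [← hh']
    exact Submodule.smul_mem_smul (Ideal.subset_span rfl) trivial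
  obtain ⟨r, hrI, hr⟩ :=
    Submodule.exists_sub_one_mem_and_smul_eq_zero_of_fg_of_le_smul I ⊤
      (Module.Finite.fg_top (R := R) (M := H)) hle
  have hrne : r ≠ 0 := by
    intro h0
    -- then -1 ∈ I, so p is a unit; but evaluation at t = 1 sends p to 0
    have hm1 : (-1 : R) ∈ I := by simpa [h0] using hrI
    obtain ⟨q, hq⟩ := Ideal.mem_span_singleton'.mp hm1
    -- evaluation map sending T n ↦ 1
    let φ : LaurentPolynomial F →ₐ[F] F :=
      AddMonoidAlgebra.lift F F ℤ (1 : Multiplicative ℤ →* F)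
    have hT : φ (LaurentPolynomial.T 1) = 1 := by
      rw [LaurentPolynomial.T]
      show (AddMonoidAlgebra.lift F F ℤ) 1 (AddMonoidAlgebra.single 1 1) = 1
      rw [AddMonoidAlgebra.lift_single]
      simp
    have := congrArg φ hq
    rw [map_mul, map_sub, hT, map_one, map_neg, map_one] at this
    simp at this
  refine fun h => ⟨r, hrne, hr h trivial⟩
end

section
/- Let G be a group, H a normal subgroup of G with quotient Q = G/H, let C be a left ℤ[G]-module and V a right ℤ[G]-module (over ℂ, i.e. V is a ℂ-vector space with a right G-action). Then the map Φ : V ⊗_{ℤ[H]} C → (V ⊗_ℂ ℂ[Q]) ⊗_{ℤ[G]} C defined by Φ(x ⊗ c) = (x ⊗ 1) ⊗ c is a well-defined isomorphism of ℂ[Q]-modules, where Q acts on the left side by g̅ ⋆ (x ⊗ c) = xγ⁻¹ ⊗ γc for any lift γ ∈ G of g̅ ∈ Q, and on the right side by g̅ · (x ⊗ q ⊗ c) = x ⊗ g̅q ⊗ c. -/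
open scoped TensorProduct
open MulOpposite

section

variable {G : Type*} [Group G] (H : Subgroup G) [H.Normal]
variable (V : Type*) [AddCommGroup V] [Module ℂ V]
  [DistribMulAction Gᵐᵒᵖ V] [SMulCommClass Gᵐᵒᵖ ℂ V]
variable (C : Type*) [AddCommGroup C] [DistribMulAction G C]

/-- The relations submodule defining `V ⊗_{ℤ[H]} C` as a quotient of `V ⊗_ℤ C`:
spanned by `v·h ⊗ c − v ⊗ h·c` for `h ∈ H`. -/
noncomputable def relSubgroup : Submodule ℂ (V ⊗[ℤ] C) :=
  Submodule.span ℂ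
    {z | ∃ (v : V) (h : H) (c : C),
      z = (op (h : G) • v) ⊗ₜ[ℤ] c - v ⊗ₜ[ℤ] ((h : G) • c)}

set_option linter.unusedSectionVars false

noncomputable def betaMap (γ : G) : (V ⊗[ℤ] C) →ₗ[ℂ] (V ⊗[ℤ] C) :=
  TensorProduct.AlgebraTensorModule.map
    (DistribMulAction.toLinearMap ℂ V (op γ⁻¹))
    (DistribMulAction.toAddMonoidHom C γ).toIntLinearMap

lemma betaMap_tmul (γ : G) (v : V) (c : C) :
    betaMap V C γ (v ⊗ₜ[ℤ] c) = (op γ⁻¹ • v) ⊗ₜ[ℤ] (γ • c) := rfl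

lemma key_rel (γ : G) (h : H) (v : V) (c : C) :
    Submodule.Quotient.mk (p := relSubgroup H V C)
      ((op (γ * (h:G))⁻¹ • v) ⊗ₜ[ℤ] ((γ * (h:G)) • c)) =
    Submodule.Quotient.mk (p := relSubgroup H V C)
      ((op γ⁻¹ • v) ⊗ₜ[ℤ] (γ • c)) := by
  rw [Submodule.Quotient.eq]
  apply Submodule.subset_span
  have hk : γ * (h:G)⁻¹ * γ⁻¹ ∈ H := by
    exact Subgroup.Normal.conj_mem ‹H.Normal› _ (H.inv_mem h.2) γ
  refine ⟨op γ⁻¹ • v, ⟨γ * (h:G)⁻¹ * γ⁻¹, hk⟩, (γ * (h:G)) • c, ?_⟩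
  congr 1
  · congr 1
    rw [smul_smul, ← op_mul]
    congr 1
    group
  · congr 1
    rw [smul_smul]
    congr 1
    group

noncomputable def Tmap (q : G ⧸ H) :
    (V ⊗[ℤ] C) →ₗ[ℂ] ((V ⊗[ℤ] C) ⧸ relSubgroup H V C) :=
  Quotient.liftOn' q
    (fun γ => (relSubgroup H V C).mkQ ∘ₗ betaMap V C γ) (by
      intro γ γ' hrel
      rw [QuotientGroup.leftRel_apply] at hrel
      refine LinearMap.ext fun x => ?_
      induction x using TensorProduct.induction_on with
      | zero => simp
      | add a b ha hb => simp [map_add, ha, hb]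
      | tmul v c =>
        simp only [LinearMap.comp_apply, betaMap_tmul, Submodule.mkQ_apply]
        have := key_rel H V C γ ⟨γ⁻¹ * γ', hrel⟩ v c
        simp only [Subgroup.coe_mk] at this
        rw [show γ * (γ⁻¹ * γ') = γ' by group] at this
        exact this.symm)

lemma Tmap_mk (γ : G) (x : V ⊗[ℤ] C) :
    Tmap H V C (QuotientGroup.mk γ) x =
      Submodule.Quotient.mk (p := relSubgroup H V C) (betaMap V C γ x) := rfl

/-- The right action of `γ ∈ G` on `V ⊗_ℂ ℂ[G/H]`, by `(v ⊗ q)·γ = v·γ ⊗ q·π(γ)`. -/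
noncomputable def rightAct (γ : G) :
    (V ⊗[ℂ] MonoidAlgebra ℂ (G ⧸ H)) →ₗ[ℂ] (V ⊗[ℂ] MonoidAlgebra ℂ (G ⧸ H)) :=
  TensorProduct.map (DistribMulAction.toLinearMap ℂ V (op γ))
    (LinearMap.mulRight ℂ (MonoidAlgebra.of ℂ (G ⧸ H) (QuotientGroup.mk γ)))

/-- The relations submodule defining `(V ⊗_ℂ ℂ[G/H]) ⊗_{ℤ[G]} C` as a quotient of
`(V ⊗_ℂ ℂ[G/H]) ⊗_ℤ C`: spanned by `w·γ ⊗ c − w ⊗ γ·c` for `γ ∈ G`. -/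
noncomputable def relGroup :
    Submodule ℂ ((V ⊗[ℂ] MonoidAlgebra ℂ (G ⧸ H)) ⊗[ℤ] C) :=
  Submodule.span ℂ
    {z | ∃ (w : V ⊗[ℂ] MonoidAlgebra ℂ (G ⧸ H)) (γ : G) (c : C),
      z = (rightAct H V γ w) ⊗ₜ[ℤ] c - w ⊗ₜ[ℤ] (γ • c)}

noncomputable def psi0 :
    ((V ⊗[ℂ] MonoidAlgebra ℂ (G ⧸ H)) ⊗[ℤ] C) →ₗ[ℂ]
      ((V ⊗[ℤ] C) ⧸ relSubgroup H V C) :=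
  TensorProduct.AlgebraTensorModule.lift
    (TensorProduct.lift
      ((Finsupp.lift _ ℂ (G ⧸ H)
        (fun q => TensorProduct.AlgebraTensorModule.curry (Tmap H V C q)) ∘ₗ
          (MonoidAlgebra.coeffLinearEquiv ℂ).toLinearMap).flip))

lemma psi0_tmul (v : V) (q : G ⧸ H) (r : ℂ) (c : C) :
    psi0 H V C ((v ⊗ₜ[ℂ] (MonoidAlgebra.single q r)) ⊗ₜ[ℤ] c) =
      r • Tmap H V C q (v ⊗ₜ[ℤ] c) := by
  simp only [psi0, MonoidAlgebra.single, TensorProduct.AlgebraTensorModule.lift_apply,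
    LinearMap.coe_restrictScalars, TensorProduct.lift.tmul, LinearMap.flip_apply,
    LinearMap.comp_apply, LinearEquiv.coe_coe, MonoidAlgebra.coeffLinearEquiv_apply,
    MonoidAlgebra.coeff_ofCoeff]
  erw [Finsupp.lift_apply, Finsupp.sum_single_index (by simp)]
  rfl

lemma rightAct_tmul (γ : G) (v : V) (x : MonoidAlgebra ℂ (G ⧸ H)) :
    rightAct H V γ (v ⊗ₜ[ℂ] x) =
      (op γ • v) ⊗ₜ[ℂ] (x * MonoidAlgebra.of ℂ (G ⧸ H) (QuotientGroup.mk γ)) := rfl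

lemma relB (w : V ⊗[ℂ] MonoidAlgebra ℂ (G ⧸ H)) (γ : G) (c : C) :
    Submodule.Quotient.mk (p := relGroup H V C) ((rightAct H V γ w) ⊗ₜ[ℤ] c) =
      Submodule.Quotient.mk (p := relGroup H V C) (w ⊗ₜ[ℤ] (γ • c)) := by
  rw [Submodule.Quotient.eq]
  exact Submodule.subset_span ⟨w, γ, c, rfl⟩

noncomputable def phi0 :
    (V ⊗[ℤ] C) →ₗ[ℂ] ((V ⊗[ℂ] MonoidAlgebra ℂ (G ⧸ H)) ⊗[ℤ] C) :=
  TensorProduct.AlgebraTensorModule.map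
    ((TensorProduct.mk ℂ V (MonoidAlgebra ℂ (G ⧸ H))).flip 1) LinearMap.id

lemma phi0_tmul (v : V) (c : C) :
    phi0 H V C (v ⊗ₜ[ℤ] c) = (v ⊗ₜ[ℂ] (1 : MonoidAlgebra ℂ (G ⧸ H))) ⊗ₜ[ℤ] c := rfl

lemma psi0_ker : relGroup H V C ≤ LinearMap.ker (psi0 H V C) := by
  rw [relGroup, Submodule.span_le]
  rintro z ⟨w, γ, c, rfl⟩
  simp only [SetLike.mem_coe, LinearMap.mem_ker, map_sub, sub_eq_zero]
  induction w using TensorProduct.induction_on with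
  | zero => simp
  | add a b ha hb =>
    rw [map_add, TensorProduct.add_tmul, TensorProduct.add_tmul, map_add, map_add, ha, hb]
  | tmul v x =>
    induction x using MonoidAlgebra.induction_linear with
    | zero => simp
    | add a b ha hb =>
      rw [TensorProduct.tmul_add, map_add, TensorProduct.add_tmul,
        TensorProduct.add_tmul, map_add, map_add, ha, hb]
    | single g r =>
      obtain ⟨δ, rfl⟩ := QuotientGroup.mk_surjective g
      rw [rightAct_tmul]
      rw [show (MonoidAlgebra.single (QuotientGroup.mk (s := H) δ) r *
          MonoidAlgebra.of ℂ (G ⧸ H) (QuotientGroup.mk γ)) =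
          MonoidAlgebra.single (QuotientGroup.mk (δ * γ)) r by
        simp [MonoidAlgebra.of_apply, MonoidAlgebra.single_mul_single]]
      rw [psi0_tmul, psi0_tmul, Tmap_mk, Tmap_mk, betaMap_tmul, betaMap_tmul]
      rw [mul_smul]
      congr 2
      rw [smul_smul, ← op_mul]
      congr 1
      group

lemma phi0_ker :
    relSubgroup H V C ≤
      LinearMap.ker ((relGroup H V C).mkQ ∘ₗ phi0 H V C) := by
  rw [relSubgroup, Submodule.span_le]
  rintro z ⟨v, h, c, rfl⟩
  simp only [SetLike.mem_coe, LinearMap.mem_ker, LinearMap.comp_apply, map_sub,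
    phi0_tmul, Submodule.mkQ_apply, sub_eq_zero]
  have : rightAct H V (h : G) (v ⊗ₜ[ℂ] (1 : MonoidAlgebra ℂ (G ⧸ H))) =
      (op (h : G) • v) ⊗ₜ[ℂ] (1 : MonoidAlgebra ℂ (G ⧸ H)) := by
    rw [rightAct_tmul]
    congr 1
    rw [show QuotientGroup.mk (s := H) (h : G) = 1 from
      (QuotientGroup.eq_one_iff _).2 h.2]
    simp [MonoidAlgebra.one_def]
  rw [← this, relB]

lemma rightAct_cancel (γ : G) (v : V) :
    rightAct H V γ ((op γ⁻¹ • v) ⊗ₜ[ℂ] (1 : MonoidAlgebra ℂ (G ⧸ H))) =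
      v ⊗ₜ[ℂ] MonoidAlgebra.of ℂ (G ⧸ H) (QuotientGroup.mk γ) := by
  rw [rightAct_tmul, smul_smul, ← op_mul, inv_mul_cancel, op_one, one_smul, one_mul]

noncomputable def PhiMap :
    ((V ⊗[ℤ] C) ⧸ relSubgroup H V C) →ₗ[ℂ]
      (((V ⊗[ℂ] MonoidAlgebra ℂ (G ⧸ H)) ⊗[ℤ] C) ⧸ relGroup H V C) :=
  Submodule.liftQ _ ((relGroup H V C).mkQ ∘ₗ phi0 H V C) (phi0_ker H V C)

noncomputable def PsiMap :
    (((V ⊗[ℂ] MonoidAlgebra ℂ (G ⧸ H)) ⊗[ℤ] C) ⧸ relGroup H V C) →ₗ[ℂ]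
      ((V ⊗[ℤ] C) ⧸ relSubgroup H V C) :=
  Submodule.liftQ _ (psi0 H V C) (psi0_ker H V C)

lemma PhiMap_mk (v : V) (c : C) :
    PhiMap H V C (Submodule.Quotient.mk (p := relSubgroup H V C) (v ⊗ₜ[ℤ] c)) =
      Submodule.Quotient.mk (p := relGroup H V C)
        ((v ⊗ₜ[ℂ] (1 : MonoidAlgebra ℂ (G ⧸ H))) ⊗ₜ[ℤ] c) := rfl

lemma PhiMap_single (γ : G) (v : V) (r : ℂ) (c : C) :
    PhiMap H V C (r • Submodule.Quotient.mk (p := relSubgroup H V C)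
        ((op γ⁻¹ • v) ⊗ₜ[ℤ] (γ • c))) =
      Submodule.Quotient.mk (p := relGroup H V C)
        ((v ⊗ₜ[ℂ] MonoidAlgebra.single (QuotientGroup.mk γ) r) ⊗ₜ[ℤ] c) := by
  rw [map_smul, PhiMap_mk, ← relB H V C _ γ c, rightAct_cancel, ← Submodule.Quotient.mk_smul]
  congr 1
  rw [TensorProduct.smul_tmul']
  congr 1
  rw [← TensorProduct.tmul_smul]
  congr 1
  rw [MonoidAlgebra.of_apply]
  rw [MonoidAlgebra.smul_single, smul_eq_mul, mul_one]

lemma left_inv : (PhiMap H V C) ∘ₗ (PsiMap H V C) = LinearMap.id := by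
  apply Submodule.linearMap_qext
  refine LinearMap.ext fun x => ?_
  induction x using TensorProduct.induction_on with
  | zero => simp
  | add a b ha hb => simp only [map_add, ha, hb]
  | tmul w c =>
    induction w using TensorProduct.induction_on with
    | zero => simp
    | add a b ha hb =>
      simp only [TensorProduct.add_tmul, map_add, ha, hb]
    | tmul v x =>
      induction x using MonoidAlgebra.induction_linear with
      | zero => simp
      | add a b ha hb =>
        simp only [TensorProduct.tmul_add, TensorProduct.add_tmul, map_add, ha, hb]
      | single g r =>
        obtain ⟨δ, rfl⟩ := QuotientGroup.mk_surjective g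
        simp only [LinearMap.comp_apply, LinearMap.id_apply, Submodule.mkQ_apply]
        rw [show PsiMap H V C (Submodule.Quotient.mk
            ((v ⊗ₜ[ℂ] MonoidAlgebra.single (QuotientGroup.mk (s := H) δ) r) ⊗ₜ[ℤ] c)) =
            psi0 H V C ((v ⊗ₜ[ℂ] MonoidAlgebra.single (QuotientGroup.mk (s := H) δ) r) ⊗ₜ[ℤ] c)
          from rfl]
        rw [psi0_tmul, Tmap_mk, betaMap_tmul]
        exact PhiMap_single H V C δ v r c

lemma right_inv : (PsiMap H V C) ∘ₗ (PhiMap H V C) = LinearMap.id := by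
  apply Submodule.linearMap_qext
  refine LinearMap.ext fun x => ?_
  induction x using TensorProduct.induction_on with
  | zero => simp
  | add a b ha hb => simp only [map_add, ha, hb]
  | tmul v c =>
    simp only [LinearMap.comp_apply, LinearMap.id_apply, Submodule.mkQ_apply]
    rw [show PsiMap H V C (PhiMap H V C (Submodule.Quotient.mk (v ⊗ₜ[ℤ] c))) =
        psi0 H V C ((v ⊗ₜ[ℂ] (1 : MonoidAlgebra ℂ (G ⧸ H))) ⊗ₜ[ℤ] c) from rfl]
    rw [show (1 : MonoidAlgebra ℂ (G ⧸ H)) =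
        MonoidAlgebra.single (QuotientGroup.mk (s := H) (1 : G)) 1 by
      simp [MonoidAlgebra.one_def]]
    rw [psi0_tmul, Tmap_mk, betaMap_tmul, inv_one, op_one, one_smul, one_smul, one_smul]

/-- For a normal subgroup `H ≤ G` with quotient `Q = G/H`, a right `ℤ[G]`-module `V`
over `ℂ` and a left `ℤ[G]`-module `C`, the map `Φ : V ⊗_{ℤ[H]} C → (V ⊗_ℂ ℂ[Q]) ⊗_{ℤ[G]} C`,
`x ⊗ c ↦ (x ⊗ 1) ⊗ c`, is a well-defined `ℂ[Q]`-module isomorphism, where `Q` acts on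
the source by `g̅ ⋆ (x ⊗ c) = xγ⁻¹ ⊗ γc` for any lift `γ` of `g̅`, and on the target by
`g̅ · (x ⊗ q ⊗ c) = x ⊗ g̅q ⊗ c`. -/
theorem tensor_over_subgroup_iso_group_algebra_tensor :
    ∃ Φ : ((V ⊗[ℤ] C) ⧸ relSubgroup H V C) ≃ₗ[ℂ]
        (((V ⊗[ℂ] MonoidAlgebra ℂ (G ⧸ H)) ⊗[ℤ] C) ⧸ relGroup H V C),
      (∀ (v : V) (c : C),
        Φ (Submodule.Quotient.mk (p := relSubgroup H V C) (v ⊗ₜ[ℤ] c)) =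
          Submodule.Quotient.mk (p := relGroup H V C)
            ((v ⊗ₜ[ℂ] (1 : MonoidAlgebra ℂ (G ⧸ H))) ⊗ₜ[ℤ] c)) ∧
      (∀ (γ : G) (v : V) (c : C),
        Φ (Submodule.Quotient.mk (p := relSubgroup H V C)
            ((op γ⁻¹ • v) ⊗ₜ[ℤ] (γ • c))) =
          Submodule.Quotient.mk (p := relGroup H V C)
            ((v ⊗ₜ[ℂ] MonoidAlgebra.of ℂ (G ⧸ H) (QuotientGroup.mk γ)) ⊗ₜ[ℤ] c)) := by
  refine ⟨LinearEquiv.ofLinear (PhiMap H V C) (PsiMap H V C)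
    (left_inv H V C) (right_inv H V C), ?_, ?_⟩
  · intro v c
    exact PhiMap_mk H V C v c
  · intro γ v c
    have := PhiMap_single H V C γ v 1 c
    rw [one_smul] at this
    rw [LinearEquiv.ofLinear_apply, this]
    rfl

end
end
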